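/- Fix μ > 1, σ̄² > 0, c > 0 with c + σ̄²/μ ≤ σ̄² μ. Let ξ(τ) be the piecewise total detection error function: ξ(τ) = 1 for τ < σ̄²/μ; ξ(τ) = (1/(2 ln μ)) ln(σ̄² μ/τ) for σ̄²/μ ≤ τ < c + σ̄²/μ; ξ(τ) = (1/(2 ln μ))[ln(σ̄² μ/τ) + ln(μ(τ−c)/σ̄²)] for c + σ̄²/μ ≤ τ ≤ σ̄² μ; ξ(τ) = (1/(2 ln μ)) ln(μ(τ−c)/σ̄²) for σ̄² μ < τ ≤ c + σ̄² μ; and ξ(τ) = 1 for τ > c + σ̄² μ. Then ξ attains its global minimum at τ* = c + σ̄²/μ, with minimum value ξ* = (1/(2 ln μ)) · ln(μ σ̄² / (c + σ̄²/μ)). -/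

import Mathlib

open Real Set

noncomputable def xiTotal (μ σ2 c τ : ℝ) : ℝ :=
  if τ < σ2 / μ then 1
  else if τ < c + σ2 / μ then (1 / (2 * Real.log μ)) * Real.log (σ2 * μ / τ)
  else if τ ≤ σ2 * μ then
    (1 / (2 * Real.log μ)) * (Real.log (σ2 * μ / τ) + Real.log (μ * (τ - c) / σ2))
  else if τ ≤ c + σ2 * μ then (1 / (2 * Real.log μ)) * Real.log (μ * (τ - c) / σ2)
  else 1

theorem xi_global_min (μ σ2 c : ℝ) (hμ : 1 < μ) (hσ : 0 < σ2) (hc : 0 < c)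
    (hfeas : c + σ2 / μ ≤ σ2 * μ) :
    (∀ τ : ℝ, xiTotal μ σ2 c (c + σ2 / μ) ≤ xiTotal μ σ2 c τ) ∧
    xiTotal μ σ2 c (c + σ2 / μ) =
      (1 / (2 * Real.log μ)) * Real.log (μ * σ2 / (c + σ2 / μ)) := by
  have hμ0 : (0:ℝ) < μ := lt_trans one_pos hμ
  have hlog : 0 < Real.log μ := Real.log_pos hμ
  have hL : 0 < 2 * Real.log μ := by positivity
  have hiL : 0 ≤ 1 / (2 * Real.log μ) := by positivity
  have hs : 0 < σ2 / μ := div_pos hσ hμ0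
  have hsμ : σ2 / μ * μ = σ2 := div_mul_cancel₀ _ (ne_of_gt hμ0)
  have ht0 : 0 < c + σ2 / μ := by positivity
  have hval : xiTotal μ σ2 c (c + σ2 / μ)
      = (1 / (2 * Real.log μ)) * Real.log (μ * σ2 / (c + σ2 / μ)) := by
    unfold xiTotal
    rw [if_neg (by linarith), if_neg (lt_irrefl _), if_pos hfeas]
    have h1 : μ * (c + σ2 / μ - c) / σ2 = 1 := by
      field_simp
      ring
    rw [h1, Real.log_one, add_zero, mul_comm σ2 μ]
  refine ⟨fun τ => ?_, hval⟩
  rw [hval]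
  have hv1 : (1 / (2 * Real.log μ)) * Real.log (μ * σ2 / (c + σ2 / μ)) ≤ 1 := by
    have harg : μ * σ2 / (c + σ2 / μ) ≤ μ * μ := by
      rw [div_le_iff₀ ht0]
      nlinarith
    have h2 : Real.log (μ * σ2 / (c + σ2 / μ)) ≤ 2 * Real.log μ := by
      calc Real.log (μ * σ2 / (c + σ2 / μ)) ≤ Real.log (μ * μ) :=
            Real.log_le_log (by positivity) harg
        _ = 2 * Real.log μ := by rw [Real.log_mul (ne_of_gt hμ0) (ne_of_gt hμ0)]; ring
    calc (1 / (2 * Real.log μ)) * Real.log (μ * σ2 / (c + σ2 / μ))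
        ≤ (1 / (2 * Real.log μ)) * (2 * Real.log μ) := by
          exact mul_le_mul_of_nonneg_left h2 hiL
      _ = 1 := by field_simp
  unfold xiTotal
  split_ifs with h1 h2 h3 h4
  · exact hv1
  · -- σ2/μ ≤ τ < c + σ2/μ
    push_neg at h1
    have hτ0 : 0 < τ := lt_of_lt_of_le hs h1
    apply mul_le_mul_of_nonneg_left _ hiL
    apply Real.log_le_log (by positivity)
    rw [div_le_div_iff₀ ht0 hτ0]
    nlinarith
  · -- c + σ2/μ ≤ τ ≤ σ2 μ
    push_neg at h1 h2
    have hτ0 : 0 < τ := lt_of_lt_of_le hs h1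
    have hτc : 0 < τ - c := by linarith
    rw [← Real.log_mul (by positivity) (by positivity)]
    apply mul_le_mul_of_nonneg_left _ hiL
    apply Real.log_le_log (by positivity)
    have hprod : σ2 * μ / τ * (μ * (τ - c) / σ2) = μ * μ * (τ - c) / τ := by
      field_simp
    rw [hprod, div_le_div_iff₀ ht0 hτ0]
    have h2μ : μ * c + σ2 ≤ μ * τ := by
      have := mul_le_mul_of_nonneg_left h2 hμ0.le
      nlinarith
    have hexp : μ * μ * (τ - c) * (c + σ2 / μ) = μ * (τ - c) * (μ * c + σ2) := by
      field_simp
    rw [hexp]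
    nlinarith [mul_nonneg (mul_nonneg hμ0.le hc.le) (sub_nonneg.mpr h2μ)]
  · -- σ2 μ < τ ≤ c + σ2 μ
    push_neg at h1 h2 h3
    have hτc : 0 < τ - c := by nlinarith
    apply mul_le_mul_of_nonneg_left _ hiL
    apply Real.log_le_log (by positivity)
    rw [div_le_div_iff₀ ht0 hσ]
    have hfeasμ : μ * c + σ2 ≤ σ2 * μ * μ := by
      have := mul_le_mul_of_nonneg_left hfeas hμ0.le
      nlinarith
    have hexp : μ * (τ - c) * (c + σ2 / μ) = (τ - c) * (μ * c + σ2) := by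
      field_simp
    rw [hexp]
    nlinarith [mul_nonneg (sub_nonneg.mpr h3.le) (by positivity : (0:ℝ) ≤ μ * c + σ2),
      mul_nonneg hc.le (sub_nonneg.mpr hfeasμ)]
  · exact hv1
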